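/- For R = I_M, tr(Ψ̃) = M·βc/(β+c), so NMSE = c/(β+c); moreover for general Hermitian PSD R with tr(R) = M and all eigenvalues λ_i ≥ 0, the NMSE tr(Ψ̃)/(Mβ) = (1/M)Σ_i cλ_i/(βλ_i + c) is maximized (among spectra with fixed trace M) when all λ_i = 1, i.e., correlation reduces the MMSE NMSE. -/

import Mathlib

open Matrix

/-- For `R = I_M` the error covariance `Ψ̃ = β I − β² I (β I + c I)⁻¹ I` has trace
`M βc/(β+c)`, so the NMSE is `c/(β+c)`; moreover for any spectrum `λ_i ≥ 0` of a
Hermitian PSD correlation matrix with `tr(R) = Σ λ_i = M`, the NMSE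
`(1/M) Σ_i c λ_i/(β λ_i + c)` is at most `c/(β+c)`, i.e. it is maximized when all
`λ_i = 1`; hence correlation reduces the MMSE NMSE. -/
theorem stmt17 (M : ℕ) (hM : 0 < M) (β c : ℝ) (hβ : 0 < β) (hc : 0 < c) :
    ((β : ℂ) • (1 : Matrix (Fin M) (Fin M) ℂ)
        - ((β ^ 2 : ℝ) : ℂ) • ((1 : Matrix (Fin M) (Fin M) ℂ) *
            ((β : ℂ) • (1 : Matrix (Fin M) (Fin M) ℂ)
              + (c : ℂ) • (1 : Matrix (Fin M) (Fin M) ℂ))⁻¹ *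
            (1 : Matrix (Fin M) (Fin M) ℂ)ᴴ)).trace
        = ((M * (β * c / (β + c)) : ℝ) : ℂ) ∧
      (M * (β * c / (β + c))) / (M * β) = c / (β + c) ∧
      ∀ lam : Fin M → ℝ, (∀ i, 0 ≤ lam i) → (∑ i, lam i) = M →
        (1 / M) * ∑ i, c * lam i / (β * lam i + c) ≤ c / (β + c) := by
  have hbc : (0:ℝ) < β + c := by linarith
  have hbc' : ((β + c : ℝ) : ℂ) ≠ 0 := by
    exact_mod_cast Complex.ofReal_ne_zero.mpr (ne_of_gt hbc)
  refine ⟨?_, ?_, ?_⟩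
  · -- trace computation
    have hsum : ((β : ℂ) • (1 : Matrix (Fin M) (Fin M) ℂ)
        + (c : ℂ) • (1 : Matrix (Fin M) (Fin M) ℂ))
        = ((β + c : ℝ) : ℂ) • (1 : Matrix (Fin M) (Fin M) ℂ) := by
      push_cast; rw [← add_smul]
    have hinv : (((β + c : ℝ) : ℂ) • (1 : Matrix (Fin M) (Fin M) ℂ))⁻¹
        = (((β + c : ℝ) : ℂ))⁻¹ • (1 : Matrix (Fin M) (Fin M) ℂ) := by
      apply Matrix.inv_eq_right_inv
      rw [Matrix.smul_mul, Matrix.mul_smul, one_mul, smul_smul,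
        mul_inv_cancel₀ hbc', one_smul]
    rw [hsum, hinv]
    simp only [Matrix.conjTranspose_one, Matrix.one_mul, Matrix.mul_one]
    rw [smul_smul, Matrix.trace_sub, Matrix.trace_smul, Matrix.trace_smul,
      Matrix.trace_one]
    have h : ((β:ℂ) + (c:ℂ)) ≠ 0 := by
      intro h0; apply hbc'; push_cast; exact h0
    simp only [Fintype.card_fin]; push_cast
    linear_combination (-(M:ℂ) * β) * (mul_inv_cancel₀ h)
  · -- arithmetic
    have hM' : (M : ℝ) ≠ 0 := Nat.cast_ne_zero.mpr hM.ne'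
    field_simp
  · -- Jensen / tangent line
    intro lam hpos hsumM
    have hM' : (0:ℝ) < (M : ℝ) := Nat.cast_pos.mpr hM
    have key : ∑ i, c * lam i / (β * lam i + c)
        ≤ ∑ i, (c / (β + c) + c^2 / (β + c)^2 * (lam i - 1)) := by
      apply Finset.sum_le_sum
      intro i _
      have hl := hpos i
      have hd : 0 < β * lam i + c := by nlinarith
      rw [div_le_iff₀ hd]
      have h2 : (0:ℝ) < (β + c)^2 := by positivity
      have hkey : (c / (β + c) + c^2 / (β + c)^2 * (lam i - 1)) * (β * lam i + c)
          - c * lam i = β * c^2 * (lam i - 1)^2 / (β + c)^2 := by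
        field_simp
        ring
      have hnn : 0 ≤ β * c^2 * (lam i - 1)^2 / (β + c)^2 := by positivity
      linarith
    have hsum2 : ∑ i, (c / (β + c) + c^2 / (β + c)^2 * (lam i - 1))
        = M * (c / (β + c)) := by
      rw [Finset.sum_add_distrib, ← Finset.mul_sum, Finset.sum_sub_distrib, hsumM]
      simp [mul_comm]
    calc (1 / (M:ℝ)) * ∑ i, c * lam i / (β * lam i + c)
        ≤ (1 / (M:ℝ)) * (M * (c / (β + c))) := by
          apply mul_le_mul_of_nonneg_left _ (by positivity)
          rw [← hsum2]; exact key
      _ = c / (β + c) := by field_simp
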